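/- Alexander trick: the group Homeo(Dⁿ, ∂Dⁿ) of homeomorphisms of the closed n-disk that restrict to the identity on the boundary, equipped with the compact-open topology, is contractible; in fact there is an explicit contraction given by H(f, t)(x) = t·f(x/t) for |x| ≤ t and H(f,t)(x) = x for t ≤ |x| ≤ 1. -/

import Mathlib

noncomputable section

open Metric unitInterval

variable (n : ℕ)

/-- The closed unit disk `Dⁿ ⊆ ℝⁿ`. -/
abbrev Dn := (closedBall (0 : EuclideanSpace ℝ (Fin n)) 1 : Set (EuclideanSpace ℝ (Fin n)))

/-- The compact-open topology on self-homeomorphisms of the disk. -/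
instance : TopologicalSpace (Dn n ≃ₜ Dn n) :=
  TopologicalSpace.induced (fun f => (⟨f, f.continuous⟩ : C(Dn n, Dn n)))
    ContinuousMap.compactOpen

/-- The group `Homeo(Dⁿ, ∂Dⁿ)` of homeomorphisms of the closed disk restricting to the
identity on the boundary sphere, with the compact-open topology. -/
def HomeoRelBoundary : Type :=
  {f : Dn n ≃ₜ Dn n // ∀ x : Dn n, ‖(x : EuclideanSpace ℝ (Fin n))‖ = 1 → f x = x}

instance : TopologicalSpace (HomeoRelBoundary n) := by
  unfold HomeoRelBoundary; infer_instance

/-- The identity element of `Homeo(Dⁿ, ∂Dⁿ)`. -/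
def homeoRelBoundaryId : HomeoRelBoundary n :=
  ⟨Homeomorph.refl _, fun _ _ => rfl⟩

/- ### Auxiliary construction: the Alexander trick -/

namespace AlexanderTrick

instance : CompactSpace (Dn n) :=
  isCompact_iff_compactSpace.mp (isCompact_closedBall _ _)

/-- Retraction of `ℝⁿ` onto the closed unit ball. -/
def P (y : EuclideanSpace ℝ (Fin n)) : Dn n :=
  ⟨(max 1 ‖y‖)⁻¹ • y, by
    have h1 : (0:ℝ) < max 1 ‖y‖ := lt_max_of_lt_left one_pos
    rw [mem_closedBall_zero_iff, norm_smul, Real.norm_eq_abs,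
      abs_of_nonneg (inv_nonneg.mpr h1.le)]
    calc (max 1 ‖y‖)⁻¹ * ‖y‖ ≤ (max 1 ‖y‖)⁻¹ * (max 1 ‖y‖) :=
          mul_le_mul_of_nonneg_left (le_max_right _ _) (inv_nonneg.mpr h1.le)
      _ = 1 := inv_mul_cancel₀ h1.ne'⟩

lemma P_cont : Continuous (P n) := by
  apply Continuous.subtype_mk
  exact ((continuous_const.max continuous_norm).inv₀
    (fun y => (lt_max_of_lt_left one_pos).ne')).smul continuous_id

lemma P_eq {y : EuclideanSpace ℝ (Fin n)} (h : ‖y‖ ≤ 1) :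
    (P n y : EuclideanSpace ℝ (Fin n)) = y := by
  simp [P, max_eq_left h]

lemma mem_aux {t : ℝ} {y : EuclideanSpace ℝ (Fin n)} (ht : 0 < t) (hy : ‖y‖ ≤ t) :
    t⁻¹ • y ∈ Dn n := by
  rw [mem_closedBall_zero_iff, norm_smul, Real.norm_eq_abs,
    abs_of_nonneg (inv_nonneg.mpr ht.le)]
  calc t⁻¹ * ‖y‖ ≤ t⁻¹ * t := mul_le_mul_of_nonneg_left hy (inv_nonneg.mpr ht.le)
    _ = 1 := inv_mul_cancel₀ ht.ne'

/-- The underlying `ℝⁿ`-valued formula of the Alexander trick. -/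
def gE (f : HomeoRelBoundary n) (t : I) (x : Dn n) : EuclideanSpace ℝ (Fin n) :=
  (max (t:ℝ) ‖(x : EuclideanSpace ℝ (Fin n))‖) •
    ((f.1 (P n ((max (t:ℝ) ‖(x : EuclideanSpace ℝ (Fin n))‖)⁻¹ •
      (x : EuclideanSpace ℝ (Fin n))))) : EuclideanSpace ℝ (Fin n))

lemma max_nonneg' (t : I) (x : Dn n) :
    0 ≤ max (t:ℝ) ‖(x : EuclideanSpace ℝ (Fin n))‖ := le_max_of_le_left t.2.1

lemma gE_mem (f : HomeoRelBoundary n) (t : I) (x : Dn n) : gE n f t x ∈ Dn n := by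
  rw [mem_closedBall_zero_iff]
  unfold gE
  rw [norm_smul, Real.norm_eq_abs, abs_of_nonneg (max_nonneg' n t x)]
  have h1 : max (t:ℝ) ‖(x : EuclideanSpace ℝ (Fin n))‖ ≤ 1 :=
    max_le t.2.2 (mem_closedBall_zero_iff.mp x.2)
  have h2 : ‖((f.1 (P n ((max (t:ℝ) ‖(x : EuclideanSpace ℝ (Fin n))‖)⁻¹ •
      (x : EuclideanSpace ℝ (Fin n)))) : Dn n) : EuclideanSpace ℝ (Fin n))‖ ≤ 1 :=
    mem_closedBall_zero_iff.mp (f.1 (P n ((max (t:ℝ) ‖(x : EuclideanSpace ℝ (Fin n))‖)⁻¹ •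
      (x : EuclideanSpace ℝ (Fin n))))).2
  calc _ ≤ max (t:ℝ) ‖(x : EuclideanSpace ℝ (Fin n))‖ * 1 :=
        mul_le_mul_of_nonneg_left h2 (max_nonneg' n t x)
    _ ≤ 1 := by rw [mul_one]; exact h1

/-- The disk-valued Alexander map. -/
def G (f : HomeoRelBoundary n) (t : I) (x : Dn n) : Dn n := ⟨gE n f t x, gE_mem n f t x⟩

lemma gE_of_le (f : HomeoRelBoundary n) (t : I) (x : Dn n)
    (h : (t:ℝ) ≤ ‖(x : EuclideanSpace ℝ (Fin n))‖) :
    gE n f t x = (x : EuclideanSpace ℝ (Fin n)) := by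
  unfold gE
  rw [max_eq_right h]
  by_cases hx : ‖(x : EuclideanSpace ℝ (Fin n))‖ = 0
  · rw [hx]; rw [norm_eq_zero] at hx; rw [hx, zero_smul]
  · have hpos : (0:ℝ) < ‖(x : EuclideanSpace ℝ (Fin n))‖ :=
      lt_of_le_of_ne (norm_nonneg _) (Ne.symm hx)
    have hnorm : ‖‖(x : EuclideanSpace ℝ (Fin n))‖⁻¹ • (x : EuclideanSpace ℝ (Fin n))‖ = 1 := by
      rw [norm_smul, Real.norm_eq_abs, abs_of_nonneg (inv_nonneg.mpr hpos.le),
        inv_mul_cancel₀ hx]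
    have hP : (P n (‖(x : EuclideanSpace ℝ (Fin n))‖⁻¹ • (x : EuclideanSpace ℝ (Fin n))) :
        EuclideanSpace ℝ (Fin n)) =
        ‖(x : EuclideanSpace ℝ (Fin n))‖⁻¹ • (x : EuclideanSpace ℝ (Fin n)) :=
      P_eq n (le_of_eq hnorm)
    have hfix := f.2 _ (by rw [hP]; exact hnorm)
    rw [hfix, hP, smul_inv_smul₀ hx]

lemma G_of_le (f : HomeoRelBoundary n) (t : I) (x : Dn n)
    (h : (t:ℝ) ≤ ‖(x : EuclideanSpace ℝ (Fin n))‖) : G n f t x = x :=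
  Subtype.ext (gE_of_le n f t x h)

lemma gE_of_ge (f : HomeoRelBoundary n) (t : I) (x : Dn n) (ht : 0 < (t:ℝ))
    (h : ‖(x : EuclideanSpace ℝ (Fin n))‖ ≤ (t:ℝ))
    (hm : (t:ℝ)⁻¹ • (x : EuclideanSpace ℝ (Fin n)) ∈ Dn n) :
    gE n f t x = (t:ℝ) •
      ((f.1 ⟨(t:ℝ)⁻¹ • (x : EuclideanSpace ℝ (Fin n)), hm⟩ : Dn n) :
        EuclideanSpace ℝ (Fin n)) := by
  unfold gE
  rw [max_eq_left h]
  have hP : P n ((t:ℝ)⁻¹ • (x : EuclideanSpace ℝ (Fin n))) =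
      ⟨(t:ℝ)⁻¹ • (x : EuclideanSpace ℝ (Fin n)), hm⟩ :=
    Subtype.ext (P_eq n (mem_closedBall_zero_iff.mp hm))
  rw [hP]

/-- Inverse element. -/
def finv (f : HomeoRelBoundary n) : HomeoRelBoundary n :=
  ⟨f.1.symm, fun x hx => by
    calc f.1.symm x = f.1.symm (f.1 x) := by rw [f.2 x hx]
      _ = x := f.1.symm_apply_apply x⟩

lemma finv_finv (f : HomeoRelBoundary n) : finv n (finv n f) = f :=
  Subtype.ext (Homeomorph.symm_symm f.1)

lemma G_left_inv (f : HomeoRelBoundary n) (t : I) (x : Dn n) :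
    G n (finv n f) t (G n f t x) = x := by
  by_cases h : (t:ℝ) ≤ ‖(x : EuclideanSpace ℝ (Fin n))‖
  · rw [G_of_le n f t x h, G_of_le n (finv n f) t x h]
  · push_neg at h
    have ht : 0 < (t:ℝ) := lt_of_le_of_lt (norm_nonneg _) h
    have hm : (t:ℝ)⁻¹ • (x : EuclideanSpace ℝ (Fin n)) ∈ Dn n := mem_aux n ht h.le
    have e1 : (G n f t x : EuclideanSpace ℝ (Fin n)) = (t:ℝ) •
        ((f.1 ⟨(t:ℝ)⁻¹ • (x : EuclideanSpace ℝ (Fin n)), hm⟩ : Dn n) :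
          EuclideanSpace ℝ (Fin n)) :=
      gE_of_ge n f t x ht h.le hm
    have hn : ‖(G n f t x : EuclideanSpace ℝ (Fin n))‖ ≤ (t:ℝ) := by
      rw [e1, norm_smul, Real.norm_eq_abs, abs_of_nonneg ht.le]
      calc (t:ℝ) * ‖_‖ ≤ (t:ℝ) * 1 :=
            mul_le_mul_of_nonneg_left (mem_closedBall_zero_iff.mp (f.1 _).2) ht.le
        _ = t := mul_one _
    have hm2 : (t:ℝ)⁻¹ • (G n f t x : EuclideanSpace ℝ (Fin n)) ∈ Dn n := mem_aux n ht hn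
    apply Subtype.ext
    have e2 : (⟨(t:ℝ)⁻¹ • (G n f t x : EuclideanSpace ℝ (Fin n)), hm2⟩ : Dn n) =
        f.1 ⟨(t:ℝ)⁻¹ • (x : EuclideanSpace ℝ (Fin n)), hm⟩ := by
      apply Subtype.ext
      show (t:ℝ)⁻¹ • (G n f t x : EuclideanSpace ℝ (Fin n)) = _
      rw [e1, inv_smul_smul₀ ht.ne']
    calc (G n (finv n f) t (G n f t x) : EuclideanSpace ℝ (Fin n))
        = (t:ℝ) • (((finv n f).1 ⟨(t:ℝ)⁻¹ • (G n f t x : EuclideanSpace ℝ (Fin n)), hm2⟩ :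
            Dn n) : EuclideanSpace ℝ (Fin n)) :=
          gE_of_ge n (finv n f) t (G n f t x) ht hn hm2
      _ = (x : EuclideanSpace ℝ (Fin n)) := by
          rw [e2]
          show (t:ℝ) • ((f.1.symm (f.1 _) : Dn n) : EuclideanSpace ℝ (Fin n)) = _
          rw [f.1.symm_apply_apply]
          exact smul_inv_smul₀ ht.ne' _

lemma gE_cont : Continuous (fun p : (HomeoRelBoundary n × I) × Dn n =>
    gE n p.1.1 p.1.2 p.2) := by
  have hcoe : Continuous (fun f : HomeoRelBoundary n =>
      (⟨f.1, f.1.continuous⟩ : C(Dn n, Dn n))) :=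
    (continuous_induced_dom.comp continuous_subtype_val).congr (fun _ => rfl)
  have hm : Continuous (fun p : (HomeoRelBoundary n × I) × Dn n =>
      max ((p.1.2 : ℝ)) ‖(p.2 : EuclideanSpace ℝ (Fin n))‖) :=
    (continuous_subtype_val.comp (continuous_snd.comp continuous_fst)).max
      (continuous_norm.comp (continuous_subtype_val.comp continuous_snd))
  rw [continuous_iff_continuousAt]
  intro p
  by_cases hp : max ((p.1.2 : ℝ)) ‖(p.2 : EuclideanSpace ℝ (Fin n))‖ = 0
  · have hg0 : gE n p.1.1 p.1.2 p.2 = 0 := by unfold gE; rw [hp, zero_smul]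
    have htend : Filter.Tendsto (fun q : (HomeoRelBoundary n × I) × Dn n =>
        gE n q.1.1 q.1.2 q.2) (nhds p) (nhds 0) := by
      apply squeeze_zero_norm (a := fun q : (HomeoRelBoundary n × I) × Dn n =>
        max ((q.1.2 : ℝ)) ‖(q.2 : EuclideanSpace ℝ (Fin n))‖)
      · intro q
        unfold gE
        rw [norm_smul, Real.norm_eq_abs, abs_of_nonneg (max_nonneg' n q.1.2 q.2)]
        exact mul_le_of_le_one_right (max_nonneg' n q.1.2 q.2)
          (mem_closedBall_zero_iff.mp (q.1.1.1 _).2)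
      · rw [← hp]; exact hm.continuousAt
    simpa only [ContinuousAt, hg0] using htend
  · have h1 : ContinuousAt (fun q : (HomeoRelBoundary n × I) × Dn n =>
        (max ((q.1.2 : ℝ)) ‖(q.2 : EuclideanSpace ℝ (Fin n))‖)⁻¹ •
          (q.2 : EuclideanSpace ℝ (Fin n))) p :=
      (hm.continuousAt.inv₀ hp).smul
        (continuous_subtype_val.comp continuous_snd).continuousAt
    have h2 : ContinuousAt (fun q : (HomeoRelBoundary n × I) × Dn n =>
        P n ((max ((q.1.2 : ℝ)) ‖(q.2 : EuclideanSpace ℝ (Fin n))‖)⁻¹ •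
          (q.2 : EuclideanSpace ℝ (Fin n)))) p := (P_cont n).continuousAt.comp h1
    have h3 : ContinuousAt (fun q : (HomeoRelBoundary n × I) × Dn n =>
        ((⟨q.1.1.1, q.1.1.1.continuous⟩ : C(Dn n, Dn n)),
          P n ((max ((q.1.2 : ℝ)) ‖(q.2 : EuclideanSpace ℝ (Fin n))‖)⁻¹ •
            (q.2 : EuclideanSpace ℝ (Fin n))))) p :=
      ((hcoe.comp (continuous_fst.comp continuous_fst)).continuousAt).prodMk h2
    have h4 : ContinuousAt (fun q : (HomeoRelBoundary n × I) × Dn n =>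
        q.1.1.1 (P n ((max ((q.1.2 : ℝ)) ‖(q.2 : EuclideanSpace ℝ (Fin n))‖)⁻¹ •
          (q.2 : EuclideanSpace ℝ (Fin n))))) p :=
      ContinuousEval.continuous_eval.continuousAt.comp h3
    exact hm.continuousAt.smul (continuous_subtype_val.continuousAt.comp h4)

/-- The Alexander homeomorphism. -/
def alexHomeo (f : HomeoRelBoundary n) (t : I) : Dn n ≃ₜ Dn n where
  toFun := G n f t
  invFun := G n (finv n f) t
  left_inv := G_left_inv n f t
  right_inv := fun x => by
    have h := G_left_inv n (finv n f) t x
    rwa [finv_finv] at h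
  continuous_toFun := by
    apply Continuous.subtype_mk
    exact ((gE_cont n).comp ((continuous_const : Continuous fun _ : Dn n =>
      ((f, t) : HomeoRelBoundary n × I)).prodMk continuous_id)).congr (fun _ => rfl)
  continuous_invFun := by
    apply Continuous.subtype_mk
    exact ((gE_cont n).comp ((continuous_const : Continuous fun _ : Dn n =>
      ((finv n f, t) : HomeoRelBoundary n × I)).prodMk continuous_id)).congr (fun _ => rfl)

/-- The Alexander homeomorphism as an element of `Homeo(Dⁿ, ∂Dⁿ)`. -/
def alexH (f : HomeoRelBoundary n) (t : I) : HomeoRelBoundary n :=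
  ⟨alexHomeo n f t, fun x hx => G_of_le n f t x (by rw [hx]; exact t.2.2)⟩

lemma alexH_cont : Continuous (fun p : HomeoRelBoundary n × I => alexH n p.1 p.2) := by
  apply Continuous.subtype_mk
  apply continuous_induced_rng.mpr
  apply ContinuousMap.continuous_of_continuous_uncurry
  exact ((gE_cont n).subtype_mk (fun q => gE_mem n q.1.1 q.1.2 q.2)).congr (fun _ => rfl)

lemma alexH_one (f : HomeoRelBoundary n) : alexH n f 1 = f := by
  apply Subtype.ext
  apply Homeomorph.ext
  intro x
  apply Subtype.ext
  have hx : ‖(x : EuclideanSpace ℝ (Fin n))‖ ≤ ((1:I):ℝ) := by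
    simpa using mem_closedBall_zero_iff.mp x.2
  have ht : (0:ℝ) < ((1:I):ℝ) := by norm_num
  have hm : (((1:I):ℝ))⁻¹ • (x : EuclideanSpace ℝ (Fin n)) ∈ Dn n := mem_aux n ht hx
  show gE n f 1 x = _
  rw [gE_of_ge n f 1 x ht hx hm]
  have e : (⟨(((1:I):ℝ))⁻¹ • (x : EuclideanSpace ℝ (Fin n)), hm⟩ : Dn n) = x := by
    apply Subtype.ext; simp
  rw [e]
  simp

lemma alexH_zero (f : HomeoRelBoundary n) : alexH n f 0 = homeoRelBoundaryId n := by
  apply Subtype.ext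
  apply Homeomorph.ext
  intro x
  have h := G_of_le n f 0 x (by simpa using norm_nonneg _)
  exact h

end AlexanderTrick

open AlexanderTrick in
/-- **the Alexander trick.** The group `Homeo(Dⁿ, ∂Dⁿ)` with the
compact-open topology is contractible; in fact there is an explicit contraction `H` with
`H(f,1) = f`, `H(f,0) = id`, given by `H(f,t)(x) = t·f(x/t)` for `|x| ≤ t` and
`H(f,t)(x) = x` for `t ≤ |x| ≤ 1`. -/
theorem stmt16 :
    ContractibleSpace (HomeoRelBoundary n) ∧
      ∃ H : C(HomeoRelBoundary n × I, HomeoRelBoundary n),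
        (∀ f, H (f, 1) = f) ∧
        (∀ f, H (f, 0) = homeoRelBoundaryId n) ∧
        (∀ (f : HomeoRelBoundary n) (t : I) (x : Dn n) (ht : 0 < (t : ℝ))
            (hx : ‖(x : EuclideanSpace ℝ (Fin n))‖ ≤ (t : ℝ)),
          ((H (f, t)).1 x : EuclideanSpace ℝ (Fin n)) =
            (t : ℝ) • ((f.1 ⟨(t : ℝ)⁻¹ • (x : EuclideanSpace ℝ (Fin n)), by
              have h1 : ‖((t : ℝ)⁻¹ • (x : EuclideanSpace ℝ (Fin n)))‖
                  = (t : ℝ)⁻¹ * ‖(x : EuclideanSpace ℝ (Fin n))‖ := by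
                rw [norm_smul, Real.norm_eq_abs, abs_of_nonneg (inv_nonneg.mpr ht.le)]
              rw [mem_closedBall_zero_iff, h1]
              calc (t : ℝ)⁻¹ * ‖(x : EuclideanSpace ℝ (Fin n))‖
                  ≤ (t : ℝ)⁻¹ * t := mul_le_mul_of_nonneg_left hx (inv_nonneg.mpr ht.le)
                _ = 1 := inv_mul_cancel₀ ht.ne'⟩ : Dn n) : EuclideanSpace ℝ (Fin n))) ∧
        (∀ (f : HomeoRelBoundary n) (t : I) (x : Dn n),
          (t : ℝ) ≤ ‖(x : EuclideanSpace ℝ (Fin n))‖ → (H (f, t)).1 x = x) := by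
  have h1 : ∀ f, (⟨fun p => alexH n p.1 p.2, alexH_cont n⟩ :
      C(HomeoRelBoundary n × I, HomeoRelBoundary n)) (f, 1) = f := fun f => alexH_one n f
  have h0 : ∀ f, (⟨fun p => alexH n p.1 p.2, alexH_cont n⟩ :
      C(HomeoRelBoundary n × I, HomeoRelBoundary n)) (f, 0) = homeoRelBoundaryId n :=
    fun f => alexH_zero n f
  constructor
  · rw [contractible_iff_id_nullhomotopic]
    refine ⟨homeoRelBoundaryId n, ?_⟩
    refine (ContinuousMap.Homotopic.symm ⟨?_⟩)
    exact
      { toFun := fun q => alexH n q.2 q.1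
        continuous_toFun := ((alexH_cont n).comp
          (continuous_snd.prodMk continuous_fst)).congr (fun _ => rfl)
        map_zero_left := fun f => h0 f
        map_one_left := fun f => h1 f }
  · refine ⟨⟨fun p => alexH n p.1 p.2, alexH_cont n⟩, h1, h0, ?_, ?_⟩
    · intro f t x ht hx
      exact gE_of_ge n f t x ht hx _
    · intro f t x h
      exact G_of_le n f t x h

end
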